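/- Let P be a finite connected poset with at least two points, Q a flat finite poset containing no 4-crown, and f : E(P) → Q an order homomorphism. Then there exists an order homomorphism g : P → Q with g restricted to E(P) equal to f. -/

import Mathlib

/-- The poset is connected: any two points are joined by a walk in the
comparability graph (equivalently, in a finite poset, by a fence). -/
def ConnectedPoset (α : Type*) [PartialOrder α] : Prop :=
  ∀ a b : α, Relation.ReflTransGen (fun u v : α => u ≤ v ∨ v ≤ u) a b

/-- A poset is flat iff it has height one. -/
def IsFlatPoset (β : Type*) [PartialOrder β] : Prop :=
  (∀ z : β, IsMin z ∨ IsMax z) ∧ ∃ u v : β, u < v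

/-- The set of extremal points of a poset. -/
def EP (α : Type*) [PartialOrder α] : Set α := {z | IsMin z ∨ IsMax z}

/-- `{a,b,v,w}` is a 4-crown: exactly the strict comparabilities
`a<v, a<w, b<v, b<w` (so `a,b` and `v,w` are incomparable pairs). -/
def Is4Crown {β : Type*} [PartialOrder β] (a b v w : β) : Prop :=
  a < v ∧ a < w ∧ b < v ∧ b < w ∧ ¬ a ≤ b ∧ ¬ b ≤ a ∧ ¬ v ≤ w ∧ ¬ w ≤ v

section Aux
variable {α β : Type*} [PartialOrder α] [PartialOrder β]
set_option linter.unusedSectionVars false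

/-- images of minimal points strictly below `x` -/
def Dset (f : EP α → β) (x : α) : Set β :=
  {p | ∃ (d : α) (hd : IsMin d), d < x ∧ f ⟨d, Or.inl hd⟩ = p}

/-- images of maximal points strictly above `x` -/
def Uset (f : EP α → β) (x : α) : Set β :=
  {p | ∃ (u : α) (hu : IsMax u), x < u ∧ f ⟨u, Or.inr hu⟩ = p}

/-- `s` contains an incomparable pair -/
def NCpair (s : Set β) : Prop := ∃ p ∈ s, ∃ q ∈ s, ¬ p ≤ q ∧ ¬ q ≤ p

lemma Dset_mono (f : EP α → β) {x y : α} (h : x ≤ y) : Dset f x ⊆ Dset f y := by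
  rintro p ⟨d, hd, hdx, rfl⟩; exact ⟨d, hd, lt_of_lt_of_le hdx h, rfl⟩

lemma Uset_anti (f : EP α → β) {x y : α} (h : x ≤ y) : Uset f y ⊆ Uset f x := by
  rintro p ⟨u, hu, hyu, rfl⟩; exact ⟨u, hu, lt_of_le_of_lt h hyu, rfl⟩

lemma Dset_le_Uset {f : EP α → β} (hf : Monotone f) {x : α} {p q : β}
    (hp : p ∈ Dset f x) (hq : q ∈ Uset f x) : p ≤ q := by
  obtain ⟨d, hd, hdx, rfl⟩ := hp
  obtain ⟨u, hu, hxu, rfl⟩ := hq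
  exact hf (Subtype.mk_le_mk.mpr (le_of_lt (lt_trans hdx hxu)))

/-- crown lemma: two common upper bounds of an incomparable pair coincide -/
lemma crown_unique (hflat : ∀ z : β, IsMin z ∨ IsMax z)
    (hnocrown : ¬ ∃ a b v w : β, Is4Crown a b v w)
    {p1 p2 q1 q2 : β} (h12 : ¬ p1 ≤ p2) (h21 : ¬ p2 ≤ p1)
    (a1 : p1 ≤ q1) (a2 : p1 ≤ q2) (b1 : p2 ≤ q1) (b2 : p2 ≤ q2) : q1 = q2 := by
  have hne1 : p1 ≠ q1 := fun h => h21 (h ▸ b1)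
  have hne2 : p1 ≠ q2 := fun h => h21 (h ▸ b2)
  have hne3 : p2 ≠ q1 := fun h => h12 (h ▸ a1)
  have hne4 : p2 ≠ q2 := fun h => h12 (h ▸ a2)
  by_contra hq
  have hmax1 : IsMax q1 := by
    rcases hflat q1 with h | h
    · exact absurd (le_antisymm (h a1) a1) (Ne.symm hne1)
    · exact h
  have hmax2 : IsMax q2 := by
    rcases hflat q2 with h | h
    · exact absurd (le_antisymm (h a2) a2) (Ne.symm hne2)
    · exact h
  exact hnocrown ⟨p1, p2, q1, q2, lt_of_le_of_ne a1 hne1, lt_of_le_of_ne a2 hne2,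
    lt_of_le_of_ne b1 hne3, lt_of_le_of_ne b2 hne4, h12, h21,
    fun h => hq (le_antisymm h (hmax1 h)),
    fun h => hq (le_antisymm (hmax2 h) h)⟩

end Aux


/-- homomorphisms from `E(P)` to a flat poset without 4-crowns
extend to `P`. -/
theorem stmt5 {α β : Type*} [PartialOrder α] [PartialOrder β] [Fintype α] [Fintype β]
    (hconn : ConnectedPoset α) (htwo : ∃ x y : α, x ≠ y)
    (hflat : IsFlatPoset β)
    (hnocrown : ¬ ∃ a b v w : β, Is4Crown a b v w)
    (f : EP α → β) (hf : Monotone f) :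
    ∃ g : α → β, Monotone g ∧ ∀ e : EP α, g (e : α) = f e := by
  classical
  -- nonemptiness of Dset and Uset for non-extremal points
  have hDne : ∀ x : α, ¬ (IsMin x ∨ IsMax x) → (Dset f x).Nonempty := by
    intro x hx
    obtain ⟨d, hdx, hd⟩ := Finite.exists_le_minimal (p := fun _ : α => True) trivial (a := x)
    have hdmin : IsMin d := fun c hc => hd.2 trivial hc
    have : d < x := lt_of_le_of_ne hdx (fun h => hx (Or.inl (h ▸ hdmin)))
    exact ⟨f ⟨d, Or.inl hdmin⟩, d, hdmin, this, rfl⟩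
  have hUne : ∀ x : α, ¬ (IsMin x ∨ IsMax x) → (Uset f x).Nonempty := by
    intro x hx
    obtain ⟨u, hxu, hu⟩ := Finite.exists_le_maximal (p := fun _ : α => True) trivial (a := x)
    have humax : IsMax u := fun c hc => hu.2 trivial hc
    have : x < u := lt_of_le_of_ne hxu (fun h => hx (Or.inr (h ▸ humax)))
    exact ⟨f ⟨u, Or.inr humax⟩, u, humax, this, rfl⟩
  -- pointwise choice of value
  have hval : ∀ x : α, ¬ (IsMin x ∨ IsMax x) → ∃ v : β,
      (NCpair (Dset f x) → v ∈ Uset f x) ∧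
      (¬ NCpair (Dset f x) → v ∈ Dset f x ∧ ∀ p ∈ Dset f x, p ≤ v) := by
    intro x hx
    by_cases hnc : NCpair (Dset f x)
    · obtain ⟨q, hq⟩ := hUne x hx
      exact ⟨q, fun _ => hq, fun h => absurd hnc h⟩
    · obtain ⟨p0, hp0⟩ := hDne x hx
      obtain ⟨m, hp0m, hm⟩ := (Set.toFinite (Dset f x)).exists_le_maximal hp0
      refine ⟨m, fun h => absurd h hnc, fun _ => ⟨hm.1, fun p hp => ?_⟩⟩
      by_contra hpm
      exact hnc ⟨p, hp, m, hm.1, hpm, fun h => hpm (hm.2 hp h)⟩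
  set g : α → β := fun x => if hx : x ∈ EP α then f ⟨x, hx⟩
    else (hval x hx).choose with hg
  have hgE : ∀ (x : α) (hx : x ∈ EP α), g x = f ⟨x, hx⟩ := by
    intro x hx; simp only [hg, dif_pos hx]
  have hgN : ∀ (x : α) (hx : ¬ (IsMin x ∨ IsMax x)),
      (NCpair (Dset f x) → g x ∈ Uset f x) ∧
      (¬ NCpair (Dset f x) → g x ∈ Dset f x ∧ ∀ p ∈ Dset f x, p ≤ g x) := by
    intro x hx
    have : g x = (hval x hx).choose := dif_neg hx
    rw [this]; exact (hval x hx).choose_spec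
  refine ⟨g, ?_, fun e => by rw [hgE e e.2]⟩
  intro x y hxy
  rcases eq_or_lt_of_le hxy with rfl | hlt
  · exact le_rfl
  by_cases hx : x ∈ EP α <;> by_cases hy : y ∈ EP α
  · -- both extremal
    rw [hgE x hx, hgE y hy]
    exact hf (Subtype.mk_le_mk.mpr hxy)
  · -- x extremal, y not
    have hxmin : IsMin x := by
      rcases hx with h | h
      · exact h
      · exact absurd (le_antisymm hxy (h hxy)) hlt.ne
    have hfx : g x ∈ Dset f y := by
      rw [hgE x hx]; exact ⟨x, hxmin, hlt, rfl⟩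
    rcases hgN y hy with ⟨hU, hD⟩
    by_cases hnc : NCpair (Dset f y)
    · exact Dset_le_Uset hf hfx (hU hnc)
    · exact (hD hnc).2 _ hfx
  · -- x not extremal, y extremal
    have hymax : IsMax y := by
      rcases hy with h | h
      · exact absurd (le_antisymm (h hxy) hxy) hlt.ne'
      · exact h
    have hfy : g y ∈ Uset f x := by
      rw [hgE y hy]; exact ⟨y, hymax, hlt, rfl⟩
    rcases hgN x hx with ⟨hU, hD⟩
    by_cases hnc : NCpair (Dset f x)
    · obtain ⟨p1, hp1, p2, hp2, h12, h21⟩ := hnc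
      exact le_of_eq (crown_unique hflat.1 hnocrown h12 h21
        (Dset_le_Uset hf hp1 (hU ⟨p1, hp1, p2, hp2, h12, h21⟩))
        (Dset_le_Uset hf hp1 hfy)
        (Dset_le_Uset hf hp2 (hU ⟨p1, hp1, p2, hp2, h12, h21⟩))
        (Dset_le_Uset hf hp2 hfy))
    · exact Dset_le_Uset hf (hD hnc).1 hfy
  · -- both non-extremal
    rcases hgN x hx with ⟨hUx, hDx⟩
    rcases hgN y hy with ⟨hUy, hDy⟩
    by_cases hnc : NCpair (Dset f x)
    · obtain ⟨p1, hp1, p2, hp2, h12, h21⟩ := hnc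
      have hncy : NCpair (Dset f y) :=
        ⟨p1, Dset_mono f hxy hp1, p2, Dset_mono f hxy hp2, h12, h21⟩
      have hgyU : g y ∈ Uset f x := Uset_anti f hxy (hUy hncy)
      exact le_of_eq (crown_unique hflat.1 hnocrown h12 h21
        (Dset_le_Uset hf hp1 (hUx ⟨p1, hp1, p2, hp2, h12, h21⟩))
        (Dset_le_Uset hf hp1 hgyU)
        (Dset_le_Uset hf hp2 (hUx ⟨p1, hp1, p2, hp2, h12, h21⟩))
        (Dset_le_Uset hf hp2 hgyU))
    · have hgxD : g x ∈ Dset f y := Dset_mono f hxy (hDx hnc).1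
      by_cases hncy : NCpair (Dset f y)
      · exact Dset_le_Uset hf hgxD (hUy hncy)
      · exact (hDy hncy).2 _ hgxD
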